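/- For a graph G = (V,E), real t, real r > 1, real q, and k ∈ ℕ: B_{r,q}(G; t−1, k) = ∑_{σ: V → {0,...,k−1}} t^{b(σ)} · r^{∑_{v∈V} q^{σ(v)}}, where b(σ) = |{uv ∈ E : σ(u) = σ(v)}| is the number of monochromatic edges; equivalently, B_{r,q}(G;t−1,k) equals Stanley's bad-colouring polynomial XB(G; t−1, x_0, x_1, ...) evaluated at x_i = r^{q^i} for i < k and x_i = 0 for i ≥ k. -/

import Mathlib

open scoped Classical

/-- A (multi)graph with vertex set a finite set of naturals, edge labels a finite set of
naturals, each edge having an unordered pair of endpoints lying in the vertex set, and a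
vertex-weight function. -/
structure WGraph where
  verts : Finset ℕ
  edges : Finset ℕ
  ends : ℕ → Sym2 ℕ
  ends_mem : ∀ e ∈ edges, ∀ v ∈ ends e, v ∈ verts
  w : ℕ → ℕ

namespace WGraph

/-- Two vertices are joined in the spanning subgraph with edge set `A`. -/
def adj (G : WGraph) (A : Finset ℕ) (u v : ℕ) : Prop := ∃ i ∈ A, G.ends i = s(u, v)

/-- Reachability in the spanning subgraph with edge set `A`. -/
def reach (G : WGraph) (A : Finset ℕ) : ℕ → ℕ → Prop := Relation.ReflTransGen (G.adj A)

/-- The set of connected components of the spanning subgraph `(V, A)`. -/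
noncomputable def components (G : WGraph) (A : Finset ℕ) : Finset (Finset ℕ) :=
  G.verts.image (fun v => G.verts.filter (G.reach A v))

/-- The total weight of a set of vertices. -/
def wt (G : WGraph) (C : Finset ℕ) : ℕ := ∑ v ∈ C, G.w v

/-- All `k`-colourings: maps `V → {0, …, k-1}`, extended by `0` off the vertex set. -/
def allCol (G : WGraph) (k : ℕ) : Set (ℕ → ℕ) :=
  {s | (∀ v ∈ G.verts, s v < k) ∧ ∀ v ∉ G.verts, s v = 0}

/-- Proper `k`-colourings: no edge is monochromatic. -/
def properCol (G : WGraph) (k : ℕ) : Set (ℕ → ℕ) :=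
  {s ∈ G.allCol k | ∀ e ∈ G.edges, ∀ a b : ℕ, G.ends e = s(a, b) → s a ≠ s b}

/-- The weighted `(r,q)`-chromatic function
`M^ω_{r,q}(G;k) = ∑_{s ∈ col(G;k)} r^{∑_{v ∈ V} ω(v) q^{s(v)}}`. -/
noncomputable def Mw (G : WGraph) (r q : ℝ) (k : ℕ) : ℝ :=
  ∑ᶠ s ∈ G.properCol k, r ^ (∑ v ∈ G.verts, (G.w v : ℝ) * q ^ (s v))

/-- The unweighted `(r,q)`-chromatic function
`M_{r,q}(G;k) = ∑_{s ∈ col(G;k)} r^{∑_{v ∈ V} q^{s(v)}}`. -/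
noncomputable def M (G : WGraph) (r q : ℝ) (k : ℕ) : ℝ :=
  ∑ᶠ s ∈ G.properCol k, r ^ (∑ v ∈ G.verts, q ^ (s v))

/-- The weighted `(r,q)`-dichromatic function
`B^ω_{r,q}(G;x,k) = ∑_{A ⊆ E} x^{|A|} ∏_{C ∈ com(A)} ∑_{i=0}^{k-1} r^{ω(C) q^i}`. -/
noncomputable def Bw (G : WGraph) (r q x : ℝ) (k : ℕ) : ℝ :=
  ∑ A ∈ G.edges.powerset, x ^ A.card *
    ∏ C ∈ G.components A, ∑ i ∈ Finset.range k, r ^ ((G.wt C : ℝ) * q ^ i)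

/-- The unweighted `(r,q)`-dichromatic function
`B_{r,q}(G;x,k) = ∑_{A ⊆ E} x^{|A|} ∏_{C ∈ com(A)} ∑_{i=0}^{k-1} r^{|C| q^i}`. -/
noncomputable def B (G : WGraph) (r q x : ℝ) (k : ℕ) : ℝ :=
  ∑ A ∈ G.edges.powerset, x ^ A.card *
    ∏ C ∈ G.components A, ∑ i ∈ Finset.range k, r ^ ((C.card : ℝ) * q ^ i)

/-- Deletion of an edge. -/
def delete (G : WGraph) (e : ℕ) : WGraph where
  verts := G.verts
  edges := G.edges.erase e
  ends := G.ends
  ends_mem := fun i hi => G.ends_mem i (Finset.mem_of_mem_erase hi)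
  w := G.w

/-- Contraction of a non-loop edge `e` with ends `a`, `b`: the vertex `b` is merged into `a`,
whose new weight is `ω(a) + ω(b)`. -/
def contract (G : WGraph) (e a b : ℕ) : WGraph where
  verts := insert a (G.verts.erase b)
  edges := G.edges.erase e
  ends := fun i => (G.ends i).map (fun v => if v = b then a else v)
  ends_mem := by
    intro i hi v hv
    rcases Sym2.mem_map.1 hv with ⟨u, hu, rfl⟩
    by_cases h : u = b
    · simp [h]
    · simp only [if_neg h]
      exact Finset.mem_insert_of_mem
        (Finset.mem_erase.2 ⟨h, G.ends_mem i (Finset.mem_of_mem_erase hi) u hu⟩)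
  w := fun v => if v = a then G.w a + G.w b else G.w v

end WGraph

open WGraph

namespace WGraph

variable (G : WGraph)

lemma adj_symm {A : Finset ℕ} {u v : ℕ} (h : G.adj A u v) : G.adj A v u := by
  obtain ⟨i, hi, he⟩ := h
  exact ⟨i, hi, he.trans (Sym2.eq_swap)⟩

lemma reach_symm {A : Finset ℕ} {u v : ℕ} (h : G.reach A u v) : G.reach A v u := by
  induction h with
  | refl => exact Relation.ReflTransGen.refl
  | tail _ hbc ih => exact Relation.ReflTransGen.head (G.adj_symm hbc) ih

/-- The connected component of `v` in the spanning subgraph `(V, A)`. -/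
noncomputable def ccomp (A : Finset ℕ) (v : ℕ) : Finset ℕ := G.verts.filter (G.reach A v)

lemma mem_ccomp {A : Finset ℕ} {v w : ℕ} :
    w ∈ G.ccomp A v ↔ w ∈ G.verts ∧ G.reach A v w := Finset.mem_filter

lemma ccomp_self {A : Finset ℕ} {v : ℕ} (hv : v ∈ G.verts) : v ∈ G.ccomp A v :=
  Finset.mem_filter.2 ⟨hv, Relation.ReflTransGen.refl⟩

lemma ccomp_eq {A : Finset ℕ} {u v : ℕ} (hu : u ∈ G.ccomp A v) :
    G.ccomp A u = G.ccomp A v := by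
  obtain ⟨huV, hr⟩ := G.mem_ccomp.1 hu
  ext w
  simp only [mem_ccomp, and_congr_right_iff]
  intro _
  exact ⟨fun h => hr.trans h, fun h => (G.reach_symm hr).trans h⟩

lemma components_eq (A : Finset ℕ) : G.components A = G.verts.image (G.ccomp A) := rfl

lemma ccomp_mem {A : Finset ℕ} {v : ℕ} (hv : v ∈ G.verts) :
    G.ccomp A v ∈ G.components A := Finset.mem_image_of_mem _ hv

lemma comp_nonempty {A : Finset ℕ} {C : Finset ℕ} (hC : C ∈ G.components A) : C.Nonempty := by
  obtain ⟨v, hv, rfl⟩ := Finset.mem_image.1 hC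
  exact ⟨v, G.ccomp_self hv⟩

lemma comp_subset {A : Finset ℕ} {C : Finset ℕ} (hC : C ∈ G.components A) : C ⊆ G.verts := by
  obtain ⟨v, hv, rfl⟩ := Finset.mem_image.1 hC
  exact Finset.filter_subset _ _

lemma ccomp_eq_of_mem {A : Finset ℕ} {C : Finset ℕ} {v : ℕ} (hC : C ∈ G.components A)
    (hv : v ∈ C) : G.ccomp A v = C := by
  obtain ⟨u, hu, rfl⟩ := Finset.mem_image.1 hC
  exact G.ccomp_eq hv

lemma reach_of_mem_comp {A : Finset ℕ} {C : Finset ℕ} {u v : ℕ} (hC : C ∈ G.components A)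
    (hu : u ∈ C) (hv : v ∈ C) : G.reach A u v := by
  have h : G.ccomp A u = C := G.ccomp_eq_of_mem hC hu
  exact (G.mem_ccomp.1 (by rw [h]; exact hv)).2

lemma sum_components (A : Finset ℕ) (f : ℕ → ℝ) :
    ∑ v ∈ G.verts, f v = ∑ C ∈ G.components A, ∑ v ∈ C, f v := by
  classical
  have hU : G.verts = (G.components A).biUnion id := by
    ext v
    simp only [Finset.mem_biUnion, id]
    constructor
    · intro hv; exact ⟨_, G.ccomp_mem hv, G.ccomp_self hv⟩
    · rintro ⟨C, hC, hv⟩; exact G.comp_subset hC hv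
  have hdisj : (↑(G.components A) : Set (Finset ℕ)).PairwiseDisjoint id := by
    intro C hC D hD hne
    refine Finset.disjoint_left.2 fun {w} hwC hwD => hne ?_
    exact (G.ccomp_eq_of_mem (Finset.mem_coe.1 hC) hwC).symm.trans
      (G.ccomp_eq_of_mem (Finset.mem_coe.1 hD) hwD)
  rw [hU, Finset.sum_biUnion hdisj]
  rfl

lemma col_const {A : Finset ℕ} {σ : ℕ → ℕ} {u v : ℕ}
    (hmono : ∀ i ∈ A, ((G.ends i).map σ).IsDiag) (h : G.reach A u v) : σ u = σ v := by
  induction h with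
  | refl => rfl
  | tail _ hbc ih =>
    obtain ⟨i, hi, he⟩ := hbc
    have hd := hmono i hi
    rw [he, Sym2.map_pair_eq, Sym2.mk_isDiag_iff] at hd
    exact ih.trans hd

end WGraph

lemma rpow_finset_sum {r : ℝ} (hr : 0 < r) {ι : Type*} (s : Finset ι) (f : ι → ℝ) :
    r ^ (∑ i ∈ s, f i) = ∏ i ∈ s, r ^ f i := by
  classical
  induction s using Finset.induction with
  | empty => simp [Real.rpow_zero]
  | insert _ _ h ih => rw [Finset.sum_insert h, Finset.prod_insert h, Real.rpow_add hr, ih]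

lemma pow_card_eq_sum_powerset (x : ℝ) (S : Finset ℕ) :
    (x + 1) ^ S.card = ∑ A ∈ S.powerset, x ^ A.card := by
  have h := Finset.prod_add (fun _ : ℕ => x) (fun _ => 1) S
  rw [Finset.prod_const] at h
  simpa [Finset.prod_const] using h

lemma pi_apply_congr {s : Finset (Finset ℕ)} (p : ∀ C ∈ s, ℕ) {C D : Finset ℕ} (h : C = D)
    (hC : C ∈ s) (hD : D ∈ s) : p C hC = p D hD := by subst h; rfl

/-- Core factorisation: for a fixed edge subset `A ⊆ E`, the sum of `r^{∑ q^{σ v}}` over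
colourings monochromatic on `A` factorises over the components of `(V, A)`. -/
lemma core_factor (G : WGraph) {r : ℝ} (hr0 : 0 < r) (q : ℝ) (k : ℕ) {A : Finset ℕ}
    (hA : A ⊆ G.edges) (col : Finset (ℕ → ℕ)) (hcol : ∀ σ, σ ∈ col ↔ σ ∈ G.allCol k) :
    ∑ σ ∈ col.filter (fun σ => ∀ i ∈ A, ((G.ends i).map σ).IsDiag),
        r ^ (∑ v ∈ G.verts, q ^ σ v)
      = ∏ C ∈ G.components A, ∑ i ∈ Finset.range k, r ^ ((C.card : ℝ) * q ^ i) := by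
  classical
  rw [Finset.prod_sum]
  refine Finset.sum_bij'
    (i := fun σ _hσ => fun C hC => σ (C.min' (G.comp_nonempty hC)))
    (j := fun p _hp => fun v => if h : v ∈ G.verts then p (G.ccomp A v) (G.ccomp_mem h) else 0)
    ?_ ?_ ?_ ?_ ?_
  · -- maps into pi
    intro σ hσ
    obtain ⟨hσc, _⟩ := Finset.mem_filter.1 hσ
    obtain ⟨h1, _⟩ := (hcol σ).1 hσc
    refine Finset.mem_pi.2 fun C hC => Finset.mem_range.2 ?_
    beta_reduce
    exact h1 _ (G.comp_subset hC (C.min'_mem _))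
  · -- maps into filter
    intro p hp
    have hp' := Finset.mem_pi.1 hp
    refine Finset.mem_filter.2 ⟨(hcol _).2 ⟨?_, ?_⟩, ?_⟩
    · intro v hv
      beta_reduce
      rw [dif_pos hv]
      exact Finset.mem_range.1 (hp' _ (G.ccomp_mem hv))
    · intro v hv
      beta_reduce
      rw [dif_neg hv]
    · intro i hi
      obtain ⟨a, b, hab⟩ :=
        Sym2.inductionOn (f := fun z => ∃ a b, z = s(a, b)) (G.ends i) fun x y => ⟨x, y, rfl⟩
      have ha : a ∈ G.verts := G.ends_mem i (hA hi) a (hab ▸ Sym2.mem_mk_left a b)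
      have hb : b ∈ G.verts := G.ends_mem i (hA hi) b (hab ▸ Sym2.mem_mk_right a b)
      rw [hab, Sym2.map_pair_eq, Sym2.mk_isDiag_iff]
      beta_reduce
      rw [dif_pos ha, dif_pos hb]
      have hcc : G.ccomp A a = G.ccomp A b :=
        G.ccomp_eq (G.mem_ccomp.2 ⟨ha, G.reach_symm (Relation.ReflTransGen.single ⟨i, hi, hab⟩)⟩)
      exact pi_apply_congr _ hcc _ _
  · -- left inverse
    intro σ hσ
    obtain ⟨hσc, hmono⟩ := Finset.mem_filter.1 hσ
    obtain ⟨_, h2⟩ := (hcol σ).1 hσc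
    funext v
    beta_reduce
    by_cases hv : v ∈ G.verts
    · rw [dif_pos hv]
      have hm : (G.ccomp A v).min' (G.comp_nonempty (G.ccomp_mem hv)) ∈ G.ccomp A v :=
        Finset.min'_mem _ _
      exact (G.col_const hmono (G.mem_ccomp.1 hm).2).symm
    · rw [dif_neg hv, h2 v hv]
  · -- right inverse
    intro p hp
    funext C hC
    beta_reduce
    have hm : C.min' (G.comp_nonempty hC) ∈ C := Finset.min'_mem _ _
    have hmV : C.min' (G.comp_nonempty hC) ∈ G.verts := G.comp_subset hC hm
    simp only [dif_pos hmV]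
    exact pi_apply_congr _ (G.ccomp_eq_of_mem hC hm) _ _
  · -- values agree
    intro σ hσ
    obtain ⟨_, hmono⟩ := Finset.mem_filter.1 hσ
    beta_reduce
    rw [G.sum_components A (fun v => q ^ σ v), rpow_finset_sum hr0,
      ← Finset.prod_attach _ (fun C => r ^ (∑ v ∈ C, q ^ σ v))]
    refine Finset.prod_congr rfl fun x _ => ?_
    congr 1
    have hmin : x.1.min' (G.comp_nonempty x.2) ∈ x.1 := Finset.min'_mem _ _
    have hval : ∀ v ∈ x.1, q ^ σ v = q ^ σ (x.1.min' (G.comp_nonempty x.2)) := by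
      intro v hv
      rw [G.col_const hmono (G.reach_of_mem_comp x.2 hv hmin)]
    rw [Finset.sum_congr rfl hval, Finset.sum_const, nsmul_eq_mul]


/-- For a graph `G`, real `t`, real `r > 1`, real `q` and `k ∈ ℕ`:
`B_{r,q}(G; t−1, k) = ∑_{σ : V → {0,…,k−1}} t^{b(σ)} · r^{∑_{v ∈ V} q^{σ(v)}}`, where
`b(σ)` is the number of monochromatic edges of `σ` (equivalently, `B_{r,q}(G;t−1,k)` is
Stanley's bad-colouring polynomial `XB(G; t−1, x_0, x_1, …)` evaluated at `x_i = r^{q^i}`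
for `i < k` and `x_i = 0` for `i ≥ k`). -/
theorem B_eq_badColouring (G : WGraph) (t r q : ℝ) (hr : 1 < r) (k : ℕ) :
    G.B r q (t - 1) k =
      ∑ᶠ σ ∈ G.allCol k,
        t ^ (G.edges.filter (fun i => ((G.ends i).map σ).IsDiag)).card *
          r ^ (∑ v ∈ G.verts, q ^ (σ v)) := by
  classical
  have hr0 : (0 : ℝ) < r := lt_trans one_pos hr
  set col : Finset (ℕ → ℕ) := (G.verts.pi fun _ => Finset.range k).image
      (fun p v => if h : v ∈ G.verts then p v h else 0) with hcoldef
  have hmemcol : ∀ σ, σ ∈ col ↔ σ ∈ G.allCol k := by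
    intro σ
    simp only [hcoldef, Finset.mem_image, Finset.mem_pi, allCol, Set.mem_setOf_eq]
    constructor
    · rintro ⟨p, hp, rfl⟩
      constructor
      · intro v hv
        beta_reduce
        rw [dif_pos hv]
        exact Finset.mem_range.1 (hp v hv)
      · intro v hv
        beta_reduce
        rw [dif_neg hv]
    · rintro ⟨h1, h2⟩
      refine ⟨fun v _ => σ v, fun v hv => Finset.mem_range.2 (h1 v hv), ?_⟩
      funext v
      by_cases hv : v ∈ G.verts
      · rw [dif_pos hv]
      · rw [dif_neg hv, h2 v hv]
  have hset : G.allCol k = ↑col := by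
    ext σ; rw [Finset.mem_coe, hmemcol]
  rw [hset, finsum_mem_coe_finset]
  have hA : ∀ σ ∈ col,
      t ^ (G.edges.filter fun i => ((G.ends i).map σ).IsDiag).card
          * r ^ (∑ v ∈ G.verts, q ^ σ v)
        = ∑ A ∈ (G.edges.filter fun i => ((G.ends i).map σ).IsDiag).powerset,
            (t - 1) ^ A.card * r ^ (∑ v ∈ G.verts, q ^ σ v) := by
    intro σ _
    rw [← Finset.sum_mul, ← pow_card_eq_sum_powerset, sub_add_cancel]
  rw [Finset.sum_congr rfl hA]
  have hswap : ∀ (σ : ℕ → ℕ) (A : Finset ℕ),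
      σ ∈ col ∧ A ∈ (G.edges.filter fun i => ((G.ends i).map σ).IsDiag).powerset ↔
        σ ∈ (fun A => col.filter fun σ => ∀ i ∈ A, ((G.ends i).map σ).IsDiag) A ∧
          A ∈ G.edges.powerset := by
    intro σ A
    simp only [Finset.mem_powerset, Finset.mem_filter, Finset.subset_iff]
    constructor
    · rintro ⟨hσ, hsub⟩
      exact ⟨⟨hσ, fun i hi => (hsub hi).2⟩, fun i hi => (hsub hi).1⟩
    · rintro ⟨⟨hσ, hmono⟩, hsub⟩
      exact ⟨hσ, fun i hi => ⟨hsub hi, hmono i hi⟩⟩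
  rw [Finset.sum_comm'
    (s' := fun A => col.filter fun σ => ∀ i ∈ A, ((G.ends i).map σ).IsDiag)
    (t' := G.edges.powerset) hswap]
  rw [WGraph.B]
  refine Finset.sum_congr rfl fun A hA' => ?_
  rw [← Finset.mul_sum]
  congr 1
  exact (core_factor G hr0 q k (Finset.mem_powerset.1 hA') col hmemcol).symm
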